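/- For every folklore state s over Fin N with values in a type V, every index i : Fin N and every value v : V, the abstraction of the state iwrite(s, i, v) equals Function.update (abs s) i v. (In words: the folklore algorithm's write operation implements writing one element of the abstract array, in both the chained and unchained cases.) -/

import Mathlib

/-- A state of the folklore initializable-array algorithm. -/
structure FolkloreState (N : ℕ) (V : Type*) where
  Varr : Fin N → V
  F : Fin N → ℕ
  T : ℕ → Fin N
  b : ℕ
  initv : V

namespace FolkloreState

variable {N : ℕ} {V : Type*}

/-- Index `i` is chained: `F i` points below the stack pointer and `T (F i)` points back. -/
def Chained (s : FolkloreState N V) (i : Fin N) : Prop :=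
  s.F i < s.b ∧ s.T (s.F i) = i

instance (s : FolkloreState N V) (i : Fin N) : Decidable (s.Chained i) := by
  unfold Chained; infer_instance

/-- The abstract array represented by a folklore state. -/
def abs (s : FolkloreState N V) : Fin N → V :=
  fun i => if s.Chained i then s.Varr i else s.initv

/-- The folklore write operation. -/
def iwrite (s : FolkloreState N V) (i : Fin N) (v : V) : FolkloreState N V :=
  if s.Chained i then
    { s with Varr := Function.update s.Varr i v }
  else
    { s with
      Varr := Function.update s.Varr i v
      T := Function.update s.T s.b i
      F := Function.update s.F i s.b
      b := s.b + 1 }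

end FolkloreState

/-- The folklore algorithm's write operation implements writing one element of the
abstract array, in both the chained and unchained cases. -/
theorem folklore_iwrite_correct {N : ℕ} {V : Type*} (s : FolkloreState N V)
    (i : Fin N) (v : V) :
    (s.iwrite i v).abs = Function.update s.abs i v := by
  funext j
  by_cases hc : s.Chained i
  · rw [FolkloreState.iwrite, if_pos hc]
    simp only [FolkloreState.abs, FolkloreState.Chained]
    by_cases hji : j = i
    · subst hji
      obtain ⟨h1, h2⟩ := hc
      simp [h1, h2]
    · simp [Function.update_of_ne hji, FolkloreState.Chained, FolkloreState.abs]
  · rw [FolkloreState.iwrite, if_neg hc]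
    simp only [FolkloreState.abs, FolkloreState.Chained]
    by_cases hji : j = i
    · subst hji
      simp only [show Function.update s.F j s.b j = s.b from Function.update_self _ _ _,
        show Function.update s.T s.b j s.b = j from Function.update_self _ _ _]
      simp
    · simp only [show Function.update s.F i s.b j = s.F j from Function.update_of_ne hji _ _,
        show Function.update s.Varr i v j = s.Varr j from Function.update_of_ne hji _ _,
        show Function.update s.abs i v j = s.abs j from Function.update_of_ne hji _ _]
      have key : (s.F j < s.b + 1 ∧ Function.update s.T s.b i (s.F j) = j) ↔
          (s.F j < s.b ∧ s.T (s.F j) = j) := by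
        constructor
        · rintro ⟨h1, h2⟩
          by_cases hb : s.F j = s.b
          · rw [hb, Function.update_self] at h2
            exact absurd h2.symm hji
          · rw [Function.update_of_ne hb] at h2
            exact ⟨Nat.lt_of_le_of_ne (Nat.lt_succ_iff.mp h1) hb, h2⟩
        · rintro ⟨h1, h2⟩
          exact ⟨Nat.lt_succ_of_lt h1, by rw [Function.update_of_ne (Nat.ne_of_lt h1)]; exact h2⟩
      rw [if_congr key rfl rfl]
      simp [FolkloreState.abs, FolkloreState.Chained]
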